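/- (Approach-speed identity, equation (2.11).) Let ω : S² → ℝ be bounded measurable with Biot–Savart velocity u. For ε ∈ (0,1], let x_{1,ε} := (cos ε, −sin ε, 0) and x_{2,ε} := (cos ε, sin ε, 0). Then u(x_{1,ε})·e_φ(x_{1,ε}) − u(x_{2,ε})·e_φ(x_{2,ε}) = (2 sin ε / π) ∫_{S²} ( y₂ y₃ ω(y) ) / ( |x_{1,ε}−y|² |x_{2,ε}−y|² ) dσ(y). -/

import Mathlib

open MeasureTheory Real Filter Set
open scoped ENNReal NNReal

noncomputable section

abbrev E3 : Type := EuclideanSpace ℝ (Fin 3)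

/-- The vector `(a, b, c)` in `ℝ³`. -/
def vec3 (a b c : ℝ) : E3 := (WithLp.equiv 2 (Fin 3 → ℝ)).symm ![a, b, c]

/-- Euclidean dot product in `ℝ³`. -/
def dot3 (x y : E3) : ℝ := x 0 * y 0 + x 1 * y 1 + x 2 * y 2

/-- Cross product in `ℝ³`. -/
def cross3 (x y : E3) : E3 :=
  vec3 (x 1 * y 2 - x 2 * y 1) (x 2 * y 0 - x 0 * y 2) (x 0 * y 1 - x 1 * y 0)

/-- The unit sphere `S²` in `ℝ³`. -/
def S2 : Set E3 := Metric.sphere (0 : E3) 1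

/-- The surface measure on `S²`: the 2-dimensional Hausdorff measure restricted to `S²`. -/
def sigma2 : Measure E3 := (μH[2] : Measure E3).restrict S2

/-- Spherical coordinates. -/
def sc (φ θ : ℝ) : E3 := vec3 (cos θ * cos φ) (cos θ * sin φ) (sin θ)

/-- The Biot–Savart velocity of a vorticity `ω` on the sphere. -/
def biotSavart (ω : E3 → ℝ) (x : E3) : E3 :=
  (2 * Real.pi)⁻¹ • ∫ y, (‖x - y‖ ^ 2)⁻¹ • ω y • cross3 x y ∂sigma2

/-- The unit tangent vector `e_φ`. -/
def ephi (y : E3) : E3 := vec3 (-(y 1) / sqrt (1 - (y 2) ^ 2)) (y 0 / sqrt (1 - (y 2) ^ 2)) 0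

/-- The unit tangent vector `e_θ`. -/
def etheta (y : E3) : E3 :=
  vec3 (-(y 2) * y 0 / sqrt (1 - (y 2) ^ 2)) (-(y 2) * y 1 / sqrt (1 - (y 2) ^ 2))
    (sqrt (1 - (y 2) ^ 2))

/-- Reflection in the second coordinate: `ỹ`. -/
def flip2 (y : E3) : E3 := vec3 (y 0) (-(y 1)) (y 2)

/-- Reflection in the third coordinate: `ȳ`. -/
def flip3 (y : E3) : E3 := vec3 (y 0) (y 1) (-(y 2))

/-- `ω` is odd-odd symmetric on the sphere. -/
def OddOdd (ω : E3 → ℝ) : Prop := ∀ x ∈ S2, ω (flip2 x) = -ω x ∧ ω (flip3 x) = -ω x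

def x₀ : E3 := vec3 1 0 0

/-- The region `Q(k₁, k₂)` on the sphere. -/
def Qset (k₁ k₂ : ℝ) : Set E3 :=
  (fun p : ℝ × ℝ => sc p.1 p.2) '' (Ioo k₁ Real.pi ×ˢ Ioo k₂ (Real.pi / 2))

/-- The open quarter sphere. -/
def S2q : Set E3 := {y ∈ S2 | 0 < y 1 ∧ 0 < y 2}

/-- The (possibly infinite) Lipschitz constant of `f` on the set `s`. -/
def lipOn (f : ℝ × ℝ → ℝ) (s : Set (ℝ × ℝ)) : ℝ≥0∞ :=
  ⨆ p ∈ s, ⨆ q ∈ s, edist (f p) (f q) / edist p q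

namespace ASI

@[simp] lemma vec3_0 (a b c : ℝ) : vec3 a b c 0 = a := rfl
@[simp] lemma vec3_1 (a b c : ℝ) : vec3 a b c 1 = b := rfl
@[simp] lemma vec3_2 (a b c : ℝ) : vec3 a b c 2 = c := rfl

lemma normsq (v : E3) : ‖v‖^2 = v 0^2 + v 1^2 + v 2^2 := by
  rw [EuclideanSpace.norm_eq, Real.sq_sqrt (by positivity)]
  simp [Fin.sum_univ_three, sq_abs]

lemma coord_le (v : E3) (i : Fin 3) : |v i| ≤ ‖v‖ := by
  have h := normsq v
  have h2 : v i ^ 2 ≤ ‖v‖^2 := by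
    have h0 := sq_nonneg (v 0); have h1 := sq_nonneg (v 1); have h3 := sq_nonneg (v 2)
    fin_cases i
    · show v 0 ^ 2 ≤ _; linarith
    · show v 1 ^ 2 ≤ _; linarith
    · show v 2 ^ 2 ≤ _; linarith
  calc |v i| = √(v i ^ 2) := (Real.sqrt_sq_eq_abs _).symm
  _ ≤ √(‖v‖^2) := Real.sqrt_le_sqrt h2
  _ = ‖v‖ := Real.sqrt_sq (norm_nonneg v)

lemma norm_le_sum (v : E3) : ‖v‖ ≤ |v 0| + |v 1| + |v 2| := by
  have h := normsq v
  have h2 : ‖v‖^2 ≤ (|v 0| + |v 1| + |v 2|)^2 := by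
    rw [h]
    nlinarith [abs_nonneg (v 0), abs_nonneg (v 1), abs_nonneg (v 2), sq_abs (v 0),
      sq_abs (v 1), sq_abs (v 2), mul_nonneg (abs_nonneg (v 0)) (abs_nonneg (v 1)),
      mul_nonneg (abs_nonneg (v 0)) (abs_nonneg (v 2)),
      mul_nonneg (abs_nonneg (v 1)) (abs_nonneg (v 2))]
  nlinarith [norm_nonneg v, abs_nonneg (v 0), abs_nonneg (v 1), abs_nonneg (v 2)]

lemma vec3_eta (y : E3) : vec3 (y 0) (y 1) (y 2) = y := by
  ext i; fin_cases i <;> rfl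

lemma dot3_inner (v w : E3) : dot3 v w = (inner ℝ v w : ℝ) := by
  simp [PiLp.inner_apply, Fin.sum_univ_three, RCLike.inner_apply, dot3]; ring

lemma cross_le (x y : E3) (hx : ‖x‖ = 1) (hy : ‖y‖ = 1) : ‖cross3 x y‖ ≤ ‖x - y‖ := by
  have h1 := normsq x; have h2 := normsq y
  rw [hx] at h1; rw [hy] at h2
  have hc : ‖cross3 x y‖^2 ≤ ‖x - y‖^2 := by
    rw [normsq, normsq]
    simp only [cross3, vec3_0, vec3_1, vec3_2, PiLp.sub_apply]
    nlinarith [sq_nonneg (x 0 * y 0 + x 1 * y 1 + x 2 * y 2 - 1)]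
  calc ‖cross3 x y‖ = √(‖cross3 x y‖^2) := (Real.sqrt_sq (norm_nonneg _)).symm
  _ ≤ √(‖x - y‖^2) := Real.sqrt_le_sqrt hc
  _ = ‖x - y‖ := Real.sqrt_sq (norm_nonneg _)

lemma cross_self (x : E3) : cross3 x x = 0 := by
  ext i; fin_cases i <;> simp [cross3] <;> ring

lemma ptwise (c s w : ℝ) (y : E3) :
    (‖vec3 c (-s) 0 - y‖^2)⁻¹ * (w * -(y 2)) - (‖vec3 c s 0 - y‖^2)⁻¹ * (w * -(y 2))
      = 4*s*(y 1 * y 2 * w / (‖vec3 c (-s) 0 - y‖^2 * ‖vec3 c s 0 - y‖^2)) := by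
  have hA : ‖vec3 c (-s) 0 - y‖^2 = (c - y 0)^2 + (-s - y 1)^2 + (y 2)^2 := by
    rw [normsq]; simp [PiLp.sub_apply]; try ring
  have hB : ‖vec3 c s 0 - y‖^2 = (c - y 0)^2 + (s - y 1)^2 + (y 2)^2 := by
    rw [normsq]; simp [PiLp.sub_apply]; try ring
  rcases eq_or_ne (y 2) 0 with h2 | h2
  · simp [h2]
  · have h2p : 0 < (y 2)^2 := by positivity
    have hA0 : ‖vec3 c (-s) 0 - y‖^2 ≠ 0 := by
      rw [hA]; nlinarith [sq_nonneg (c - y 0), sq_nonneg (-s - y 1)]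
    have hB0 : ‖vec3 c s 0 - y‖^2 ≠ 0 := by
      rw [hB]; nlinarith [sq_nonneg (c - y 0), sq_nonneg (s - y 1)]
    rw [hA, hB] at *
    field_simp
    ring



def gr (p : Fin 2 → ℝ) : ℝ := Real.sqrt (1 - p 0^2 - p 1^2)
def Kset : Set (Fin 2 → ℝ) := {p | p 0^2 + p 1^2 ≤ 15/16}

lemma gr_ge {p} (hp : p ∈ Kset) : (1/4 : ℝ) ≤ gr p := by
  have h : (1/16 : ℝ) ≤ 1 - p 0^2 - p 1^2 := by simp only [Kset, mem_setOf_eq] at hp; linarith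
  calc (1/4:ℝ) = √(1/16) := by
        rw [show (1/16:ℝ) = (1/4)^2 by norm_num, Real.sqrt_sq (by norm_num)]
  _ ≤ _ := Real.sqrt_le_sqrt h

lemma gr_sq {p} (hp : p ∈ Kset) : gr p ^ 2 = 1 - p 0^2 - p 1^2 :=
  Real.sq_sqrt (by simp only [Kset, mem_setOf_eq] at hp; nlinarith [sq_nonneg (p 0), sq_nonneg (p 1)])

lemma absK {p} (hp : p ∈ Kset) (i : Fin 2) : |p i| ≤ 1 := by
  simp only [Kset, mem_setOf_eq] at hp
  have h2 : p i ^ 2 ≤ 1 := by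
    have h0 := sq_nonneg (p 0); have h1 := sq_nonneg (p 1)
    fin_cases i
    · show p 0 ^ 2 ≤ 1; linarith
    · show p 1 ^ 2 ≤ 1; linarith
  nlinarith [sq_nonneg (|p i| - 1), abs_nonneg (p i), sq_abs (p i)]

lemma gr_diff {p q} (hp : p ∈ Kset) (hq : q ∈ Kset) : |gr p - gr q| ≤ 8 * dist p q := by
  have hup := gr_ge hp; have huq := gr_ge hq
  have h1 : |gr p - gr q| * (gr p + gr q) = |gr p ^2 - gr q ^2| := by
    rw [← abs_of_nonneg (show (0:ℝ) ≤ gr p + gr q by linarith), ← abs_mul]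
    congr 1; ring
  have hd0 : |p 0 - q 0| ≤ dist p q := by
    rw [← Real.dist_eq]; exact dist_le_pi_dist p q 0
  have hd1 : |p 1 - q 1| ≤ dist p q := by
    rw [← Real.dist_eq]; exact dist_le_pi_dist p q 1
  have e0 : |q 0^2 - p 0^2| ≤ 2 * dist p q := by
    rw [show q 0^2 - p 0^2 = (p 0 - q 0)*(-(q 0 + p 0)) by ring, abs_mul, abs_neg]
    have habs : |q 0 + p 0| ≤ 2 := by
      have := absK hp 0; have := absK hq 0
      calc |q 0 + p 0| ≤ |q 0| + |p 0| := abs_add_le _ _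
      _ ≤ 2 := by linarith
    nlinarith [abs_nonneg (p 0 - q 0), dist_nonneg (x := p) (y := q)]
  have e1 : |q 1^2 - p 1^2| ≤ 2 * dist p q := by
    rw [show q 1^2 - p 1^2 = (p 1 - q 1)*(-(q 1 + p 1)) by ring, abs_mul, abs_neg]
    have habs : |q 1 + p 1| ≤ 2 := by
      have := absK hp 1; have := absK hq 1
      calc |q 1 + p 1| ≤ |q 1| + |p 1| := abs_add_le _ _
      _ ≤ 2 := by linarith
    nlinarith [abs_nonneg (p 1 - q 1), dist_nonneg (x := p) (y := q)]
  have h2 : |gr p ^2 - gr q ^2| ≤ 4 * dist p q := by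
    rw [gr_sq hp, gr_sq hq]
    calc |1 - p 0^2 - p 1^2 - (1 - q 0^2 - q 1^2)|
        = |(q 0^2 - p 0^2) + (q 1^2 - p 1^2)| := by ring_nf
    _ ≤ |q 0^2 - p 0^2| + |q 1^2 - p 1^2| := abs_add_le _ _
    _ ≤ 4 * dist p q := by linarith
  nlinarith [mul_le_mul_of_nonneg_left (show (1/2:ℝ) ≤ gr p + gr q by linarith)
    (abs_nonneg (gr p - gr q)), abs_nonneg (gr p - gr q)]

def F0 (s : ℝ) (p : Fin 2 → ℝ) : E3 := vec3 (s * gr p) (p 0) (p 1)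
def F1 (s : ℝ) (p : Fin 2 → ℝ) : E3 := vec3 (p 0) (s * gr p) (p 1)
def F2 (s : ℝ) (p : Fin 2 → ℝ) : E3 := vec3 (p 0) (p 1) (s * gr p)

lemma lip_aux {s : ℝ} (hs : |s| ≤ 1) {p q : Fin 2 → ℝ} (hp : p ∈ Kset) (hq : q ∈ Kset) :
    |s * gr p - s * gr q| + |p 0 - q 0| + |p 1 - q 1| ≤ 10 * dist p q := by
  have hg : |s * gr p - s * gr q| ≤ 8 * dist p q := by
    rw [← mul_sub, abs_mul]
    have h := gr_diff hp hq
    nlinarith [abs_nonneg (gr p - gr q), abs_nonneg s, dist_nonneg (x := p) (y := q)]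
  have hd0 : |p 0 - q 0| ≤ dist p q := by rw [← Real.dist_eq]; exact dist_le_pi_dist p q 0
  have hd1 : |p 1 - q 1| ≤ dist p q := by rw [← Real.dist_eq]; exact dist_le_pi_dist p q 1
  linarith

lemma lipF0 {s : ℝ} (hs : |s| ≤ 1) : LipschitzOnWith 10 (F0 s) Kset := by
  apply LipschitzOnWith.of_dist_le_mul
  intro p hp q hq
  rw [dist_eq_norm]
  simp only [F0]
  have h3 := norm_le_sum (F0 s p - F0 s q)
  simp only [F0, PiLp.sub_apply, vec3_0, vec3_1, vec3_2] at h3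
  have := lip_aux hs hp hq
  push_cast
  linarith

lemma lipF1 {s : ℝ} (hs : |s| ≤ 1) : LipschitzOnWith 10 (F1 s) Kset := by
  apply LipschitzOnWith.of_dist_le_mul
  intro p hp q hq
  rw [dist_eq_norm]
  simp only [F1]
  have h3 := norm_le_sum (F1 s p - F1 s q)
  simp only [F1, PiLp.sub_apply, vec3_0, vec3_1, vec3_2] at h3
  have := lip_aux hs hp hq
  push_cast
  linarith

lemma lipF2 {s : ℝ} (hs : |s| ≤ 1) : LipschitzOnWith 10 (F2 s) Kset := by
  apply LipschitzOnWith.of_dist_le_mul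
  intro p hp q hq
  rw [dist_eq_norm]
  simp only [F2]
  have h3 := norm_le_sum (F2 s p - F2 s q)
  simp only [F2, PiLp.sub_apply, vec3_0, vec3_1, vec3_2] at h3
  have := lip_aux hs hp hq
  push_cast
  linarith

lemma measure_image_le (F : (Fin 2 → ℝ) → E3) (hF : LipschitzOnWith 10 F Kset)
    {s : Set (Fin 2 → ℝ)} (hs : s ⊆ Kset) :
    μH[2] (F '' s) ≤ 100 * volume s := by
  have h := (hF.mono hs).hausdorffMeasure_image_le (by norm_num : (0:ℝ) ≤ 2)
  have h10 : ((10:ℝ≥0) : ℝ≥0∞) ^ (2:ℝ) = 100 := by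
    rw [show (2:ℝ) = ((2:ℕ):ℝ) by norm_num, ENNReal.rpow_natCast]
    norm_num
  rw [h10] at h
  have hvol : (μH[2] : Measure (Fin 2 → ℝ)) s = volume s := by
    have := hausdorffMeasure_pi_real (ι := Fin 2)
    simp only [Fintype.card_fin] at this
    rw [show ((2:ℕ):ℝ) = (2:ℝ) by norm_num] at this
    rw [this]
  rwa [hvol] at h

lemma S2_norm {y : E3} (hy : y ∈ S2) : ‖y‖ = 1 := by
  simpa [S2] using hy

lemma S2_subset : S2 ⊆ F0 1 '' Kset ∪ F0 (-1) '' Kset ∪ F1 1 '' Kset ∪ F1 (-1) '' Kset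
    ∪ F2 1 '' Kset ∪ F2 (-1) '' Kset := by
  intro y hy
  have hsq : y 0^2 + y 1^2 + y 2^2 = 1 := by
    have := normsq y; rw [S2_norm hy] at this; linarith [this.symm]
  have hcov : 1/3 ≤ y 0^2 ∨ 1/3 ≤ y 1^2 ∨ 1/3 ≤ y 2^2 := by
    by_contra h; push_neg at h; obtain ⟨h0, h1, h2⟩ := h; linarith
  simp only [mem_union, mem_image]
  rcases hcov with h | h | h
  · have hpK : (![y 1, y 2] : Fin 2 → ℝ) ∈ Kset := by
      simp only [Kset, mem_setOf_eq, Matrix.cons_val_zero, Matrix.cons_val_one, Matrix.head_cons]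
      nlinarith
    have hgr : gr ![y 1, y 2] = |y 0| := by
      rw [gr, show (1:ℝ) - (![y 1, y 2]) 0^2 - (![y 1, y 2]) 1^2 = y 0^2 by
        simp only [Matrix.cons_val_zero, Matrix.cons_val_one, Matrix.head_cons]; linarith]
      exact Real.sqrt_sq_eq_abs _
    rcases le_or_gt 0 (y 0) with h0 | h0
    · have : F0 1 ![y 1, y 2] = y := by
        rw [F0, hgr, abs_of_nonneg h0]
        simp only [one_mul, Matrix.cons_val_zero, Matrix.cons_val_one, Matrix.head_cons]
        exact vec3_eta y
      exact Or.inl (Or.inl (Or.inl (Or.inl (Or.inl ⟨_, hpK, this⟩))))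
    · have : F0 (-1) ![y 1, y 2] = y := by
        rw [F0, hgr, abs_of_neg h0]
        simp only [neg_mul, one_mul, neg_neg, Matrix.cons_val_zero, Matrix.cons_val_one,
          Matrix.head_cons]
        exact vec3_eta y
      exact Or.inl (Or.inl (Or.inl (Or.inl (Or.inr ⟨_, hpK, this⟩))))
  · have hpK : (![y 0, y 2] : Fin 2 → ℝ) ∈ Kset := by
      simp only [Kset, mem_setOf_eq, Matrix.cons_val_zero, Matrix.cons_val_one, Matrix.head_cons]
      nlinarith
    have hgr : gr ![y 0, y 2] = |y 1| := by
      rw [gr, show (1:ℝ) - (![y 0, y 2]) 0^2 - (![y 0, y 2]) 1^2 = y 1^2 by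
        simp only [Matrix.cons_val_zero, Matrix.cons_val_one, Matrix.head_cons]; linarith]
      exact Real.sqrt_sq_eq_abs _
    rcases le_or_gt 0 (y 1) with h0 | h0
    · have : F1 1 ![y 0, y 2] = y := by
        rw [F1, hgr, abs_of_nonneg h0]
        simp only [one_mul, Matrix.cons_val_zero, Matrix.cons_val_one, Matrix.head_cons]
        exact vec3_eta y
      exact Or.inl (Or.inl (Or.inl (Or.inr ⟨_, hpK, this⟩)))
    · have : F1 (-1) ![y 0, y 2] = y := by
        rw [F1, hgr, abs_of_neg h0]
        simp only [neg_mul, one_mul, neg_neg, Matrix.cons_val_zero, Matrix.cons_val_one,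
          Matrix.head_cons]
        exact vec3_eta y
      exact Or.inl (Or.inl (Or.inr ⟨_, hpK, this⟩))
  · have hpK : (![y 0, y 1] : Fin 2 → ℝ) ∈ Kset := by
      simp only [Kset, mem_setOf_eq, Matrix.cons_val_zero, Matrix.cons_val_one, Matrix.head_cons]
      nlinarith
    have hgr : gr ![y 0, y 1] = |y 2| := by
      rw [gr, show (1:ℝ) - (![y 0, y 1]) 0^2 - (![y 0, y 1]) 1^2 = y 2^2 by
        simp only [Matrix.cons_val_zero, Matrix.cons_val_one, Matrix.head_cons]; linarith]
      exact Real.sqrt_sq_eq_abs _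
    rcases le_or_gt 0 (y 2) with h0 | h0
    · have : F2 1 ![y 0, y 1] = y := by
        rw [F2, hgr, abs_of_nonneg h0]
        simp only [one_mul, Matrix.cons_val_zero, Matrix.cons_val_one, Matrix.head_cons]
        exact vec3_eta y
      exact Or.inl (Or.inr ⟨_, hpK, this⟩)
    · have : F2 (-1) ![y 0, y 1] = y := by
        rw [F2, hgr, abs_of_neg h0]
        simp only [neg_mul, one_mul, neg_neg, Matrix.cons_val_zero, Matrix.cons_val_one,
          Matrix.head_cons]
        exact vec3_eta y
      exact Or.inr ⟨_, hpK, this⟩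

lemma Kvol : volume Kset < ⊤ := by
  have hsub : Kset ⊆ Metric.closedBall (0 : Fin 2 → ℝ) 1 := by
    intro p hp
    rw [Metric.mem_closedBall]
    refine dist_pi_le_iff zero_le_one |>.2 fun i => ?_
    rw [Real.dist_eq]
    simpa using absK hp i
  calc volume Kset ≤ volume (Metric.closedBall (0 : Fin 2 → ℝ) 1) := measure_mono hsub
  _ = ENNReal.ofReal ((2*1)^Fintype.card (Fin 2)) := Real.volume_pi_closedBall 0 zero_le_one
  _ < ⊤ := ENNReal.ofReal_lt_top

lemma piece_lt (F : (Fin 2 → ℝ) → E3) (hF : LipschitzOnWith 10 F Kset) :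
    μH[2] (F '' Kset) < ⊤ :=
  lt_of_le_of_lt (measure_image_le F hF subset_rfl)
    (ENNReal.mul_lt_top (by norm_num) Kvol)

lemma S2_meas_lt : μH[2] (S2 : Set E3) < ⊤ := by
  have h6 : ∀ (F : (Fin 2 → ℝ) → E3), LipschitzOnWith 10 F Kset → μH[2] (F '' Kset) < ⊤ :=
    piece_lt
  have h1 : |(1:ℝ)| ≤ 1 := by norm_num
  have hm1 : |(-1:ℝ)| ≤ 1 := by norm_num
  calc μH[2] (S2 : Set E3)
      ≤ μH[2] (F0 1 '' Kset ∪ F0 (-1) '' Kset ∪ F1 1 '' Kset ∪ F1 (-1) '' Kset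
        ∪ F2 1 '' Kset ∪ F2 (-1) '' Kset) := measure_mono S2_subset
  _ < ⊤ := by
      refine lt_of_le_of_lt (measure_union_le _ _) (ENNReal.add_lt_top.2 ⟨?_, h6 _ (lipF2 hm1)⟩)
      refine lt_of_le_of_lt (measure_union_le _ _) (ENNReal.add_lt_top.2 ⟨?_, h6 _ (lipF2 h1)⟩)
      refine lt_of_le_of_lt (measure_union_le _ _) (ENNReal.add_lt_top.2 ⟨?_, h6 _ (lipF1 hm1)⟩)
      refine lt_of_le_of_lt (measure_union_le _ _) (ENNReal.add_lt_top.2 ⟨?_, h6 _ (lipF1 h1)⟩)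
      exact lt_of_le_of_lt (measure_union_le _ _)
        (ENNReal.add_lt_top.2 ⟨h6 _ (lipF0 h1), h6 _ (lipF0 hm1)⟩)

lemma cap_bound {x : E3} (hx0 : 1/2 ≤ x 0) {r : ℝ} (hr : 0 < r) (hr4 : r ≤ 1/4) :
    μH[2] (Metric.ball x r ∩ S2) ≤ ENNReal.ofReal (400 * r^2) := by
  have hsub : Metric.ball x r ∩ S2 ⊆ F0 1 '' (Metric.closedBall ![x 1, x 2] r ∩ Kset) := by
    rintro y ⟨hyb, hyS⟩
    have hd : ‖y - x‖ < r := by rw [← dist_eq_norm]; exact Metric.mem_ball.1 hyb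
    have h0 : |y 0 - x 0| ≤ r := by
      have := coord_le (y - x) 0; simp only [PiLp.sub_apply] at this; linarith
    have h1 : |y 1 - x 1| ≤ r := by
      have := coord_le (y - x) 1; simp only [PiLp.sub_apply] at this; linarith
    have h2 : |y 2 - x 2| ≤ r := by
      have := coord_le (y - x) 2; simp only [PiLp.sub_apply] at this; linarith
    have hy0 : 1/4 ≤ y 0 := by have := abs_le.1 h0; linarith
    have hsq : y 0^2 + y 1^2 + y 2^2 = 1 := by
      have := normsq y; rw [S2_norm hyS] at this; linarith [this.symm]
    have hpK : (![y 1, y 2] : Fin 2 → ℝ) ∈ Kset := by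
      simp only [Kset, mem_setOf_eq, Matrix.cons_val_zero, Matrix.cons_val_one, Matrix.head_cons]
      nlinarith
    refine ⟨![y 1, y 2], ⟨?_, hpK⟩, ?_⟩
    · rw [Metric.mem_closedBall]
      refine dist_pi_le_iff hr.le |>.2 fun i => ?_
      fin_cases i
      · simpa [Real.dist_eq] using h1
      · simpa [Real.dist_eq] using h2
    · have hgr : gr ![y 1, y 2] = y 0 := by
        rw [gr, show (1:ℝ) - (![y 1, y 2]) 0^2 - (![y 1, y 2]) 1^2 = y 0^2 by
          simp only [Matrix.cons_val_zero, Matrix.cons_val_one, Matrix.head_cons]; linarith]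
        rw [Real.sqrt_sq_eq_abs, abs_of_nonneg (by linarith)]
      rw [F0, hgr]
      simp only [one_mul, Matrix.cons_val_zero, Matrix.cons_val_one, Matrix.head_cons]
      exact vec3_eta y
  calc μH[2] (Metric.ball x r ∩ S2)
      ≤ μH[2] (F0 1 '' (Metric.closedBall ![x 1, x 2] r ∩ Kset)) := measure_mono hsub
  _ ≤ 100 * volume (Metric.closedBall ![x 1, x 2] r ∩ Kset) :=
      measure_image_le _ (lipF0 (by norm_num)) inter_subset_right
  _ ≤ 100 * volume (Metric.closedBall ![x 1, x 2] r) := by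
      gcongr; exact inter_subset_left
  _ = 100 * ENNReal.ofReal ((2*r)^Fintype.card (Fin 2)) := by
      rw [Real.volume_pi_closedBall _ hr.le]
  _ = ENNReal.ofReal (400 * r^2) := by
      rw [show (100:ℝ≥0∞) = ENNReal.ofReal 100 by norm_num,
        ← ENNReal.ofReal_mul (by norm_num)]
      congr 1
      simp [Fintype.card_fin]
      ring

lemma h22 : (2:ℝ≥0∞) * 2⁻¹ = 1 := ENNReal.mul_inv_cancel (by norm_num) (by norm_num)

lemma hOR : ENNReal.ofReal (2:ℝ)⁻¹ = 2⁻¹ := by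
  rw [ENNReal.ofReal_inv_of_pos two_pos]; norm_num

lemma S2_measurable : MeasurableSet S2 := Metric.isClosed_sphere.measurableSet

lemma finint {x : E3} (hx0 : 1/2 ≤ x 0) : ∫⁻ y, ENNReal.ofReal ‖x - y‖⁻¹ ∂sigma2 < ⊤ := by
  set T : ℝ≥0∞ := μH[2] (S2 : Set E3) with hT
  have hTlt : T < ⊤ := S2_meas_lt
  have hpt : ∀ y : E3, ENNReal.ofReal ‖x - y‖⁻¹ ≤
      1 + ∑' k : ℕ, (Metric.ball x ((2:ℝ)⁻¹^k)).indicator (fun _ => (2:ℝ≥0∞)^(k+1)) y := by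
    intro y
    rcases le_or_gt 1 ‖x - y‖ with h1 | h1
    · refine le_trans ?_ le_self_add
      calc ENNReal.ofReal ‖x - y‖⁻¹ ≤ ENNReal.ofReal 1 :=
            ENNReal.ofReal_le_ofReal (inv_le_one_of_one_le₀ h1)
      _ = 1 := ENNReal.ofReal_one
    · rcases eq_or_lt_of_le (norm_nonneg (x - y)) with h0 | h0
      · rw [← h0]; simp
      · have hP : ∃ n : ℕ, (2:ℝ)⁻¹ ^ n ≤ ‖x - y‖ := by
          obtain ⟨n, hn⟩ := exists_pow_lt_of_lt_one h0 (by norm_num : (2:ℝ)⁻¹ < 1)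
          exact ⟨n, hn.le⟩
        have hm := Nat.find_spec hP
        have hm1 : 1 ≤ Nat.find hP := by
          rcases Nat.eq_zero_or_pos (Nat.find hP) with h | h
          · exfalso; rw [h] at hm; simp at hm; linarith
          · exact h
        set k := Nat.find hP - 1 with hk
        have hkm : Nat.find hP = k + 1 := (Nat.succ_pred_eq_of_pos hm1).symm
        have hdk : ‖x - y‖ < (2:ℝ)⁻¹ ^ k := by
          have h := Nat.find_min hP (show k < Nat.find hP by omega)
          push_neg at h; linarith
        have hmem : y ∈ Metric.ball x ((2:ℝ)⁻¹ ^ k) := by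
          rw [Metric.mem_ball, dist_comm, dist_eq_norm]; exact hdk
        have hle : ENNReal.ofReal ‖x - y‖⁻¹ ≤ (2:ℝ≥0∞)^(k+1) := by
          have hd2 : (2:ℝ)⁻¹ ^ (k+1) ≤ ‖x - y‖ := by rw [← hkm]; exact hm
          have hinv : ‖x - y‖⁻¹ ≤ (2:ℝ)^(k+1) := by
            rw [show ((2:ℝ))^(k+1) = ((2:ℝ)⁻¹^(k+1))⁻¹ by rw [← inv_pow]; simp]
            exact inv_anti₀ (by positivity) hd2
          calc ENNReal.ofReal ‖x - y‖⁻¹ ≤ ENNReal.ofReal ((2:ℝ)^(k+1)) :=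
                ENNReal.ofReal_le_ofReal hinv
          _ = (2:ℝ≥0∞)^(k+1) := by rw [ENNReal.ofReal_pow (by norm_num)]; norm_num
        calc ENNReal.ofReal ‖x - y‖⁻¹ ≤ (2:ℝ≥0∞)^(k+1) := hle
        _ = (Metric.ball x ((2:ℝ)⁻¹^k)).indicator (fun _ => (2:ℝ≥0∞)^(k+1)) y := by
            rw [indicator_of_mem hmem]
        _ ≤ ∑' k' : ℕ, (Metric.ball x ((2:ℝ)⁻¹^k')).indicator (fun _ => (2:ℝ≥0∞)^(k'+1)) y :=
            ENNReal.le_tsum k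
        _ ≤ _ := le_add_self
  have hmeasb : ∀ k : ℕ,
      Measurable ((Metric.ball x ((2:ℝ)⁻¹^k)).indicator (fun _ : E3 => (2:ℝ≥0∞)^(k+1))) :=
    fun k => measurable_const.indicator Metric.isOpen_ball.measurableSet
  have hterm : ∀ k : ℕ, (2:ℝ≥0∞)^(k+1) * sigma2 (Metric.ball x ((2:ℝ)⁻¹^k))
      ≤ (8*T + 800) * (2⁻¹:ℝ≥0∞)^k := by
    intro k
    have hball : sigma2 (Metric.ball x ((2:ℝ)⁻¹^k)) = μH[2] (Metric.ball x ((2:ℝ)⁻¹^k) ∩ S2) :=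
      Measure.restrict_apply Metric.isOpen_ball.measurableSet
    rcases lt_or_ge k 2 with hk2 | hk2
    · have hmono : sigma2 (Metric.ball x ((2:ℝ)⁻¹^k)) ≤ T := by
        rw [hball]; exact measure_mono inter_subset_right
      interval_cases k
      · calc (2:ℝ≥0∞)^(0+1) * sigma2 (Metric.ball x ((2:ℝ)⁻¹^0))
            ≤ 2 * T := by rw [pow_one]; exact mul_le_mul_right hmono 2
        _ ≤ (8*T + 800) * (2⁻¹:ℝ≥0∞)^0 := by
            rw [pow_zero, mul_one]
            calc (2:ℝ≥0∞) * T ≤ 8 * T := mul_le_mul_left (by norm_num) T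
            _ ≤ 8*T + 800 := le_self_add
      · calc (2:ℝ≥0∞)^(1+1) * sigma2 (Metric.ball x ((2:ℝ)⁻¹^1))
            ≤ 4 * T := by norm_num; exact mul_le_mul_right hmono 4
        _ ≤ (8*T + 800) * (2⁻¹:ℝ≥0∞)^1 := by
            rw [pow_one, add_mul]
            have h : (8:ℝ≥0∞)*T*2⁻¹ = 4*T := by
              calc (8:ℝ≥0∞)*T*2⁻¹ = 4*(2*2⁻¹)*T := by ring
              _ = 4*T := by rw [h22]; ring
            rw [h]
            exact le_self_add
    · have hr : (0:ℝ) < (2:ℝ)⁻¹^k := by positivity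
      have hr4 : (2:ℝ)⁻¹^k ≤ 1/4 := by
        calc (2:ℝ)⁻¹^k ≤ (2:ℝ)⁻¹^2 := pow_le_pow_of_le_one (by norm_num) (by norm_num) hk2
        _ = 1/4 := by norm_num
      have hcap := cap_bound hx0 hr hr4
      calc (2:ℝ≥0∞)^(k+1) * sigma2 (Metric.ball x ((2:ℝ)⁻¹^k))
          ≤ (2:ℝ≥0∞)^(k+1) * ENNReal.ofReal (400 * ((2:ℝ)⁻¹^k)^2) := by
            rw [hball]; exact mul_le_mul_right hcap _
      _ = 800 * (2⁻¹:ℝ≥0∞)^k := by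
          have h1 : (400 : ℝ) * ((2:ℝ)⁻¹^k)^2 = 400 * ((2:ℝ)⁻¹^k) * ((2:ℝ)⁻¹^k) := by ring
          rw [h1, ENNReal.ofReal_mul (by positivity), ENNReal.ofReal_mul (by norm_num),
            ENNReal.ofReal_pow (by norm_num), hOR]
          have h3 : ENNReal.ofReal (400:ℝ) = 400 := by norm_num
          rw [h3, pow_succ]
          have hcancel : (2:ℝ≥0∞)^k * (2⁻¹:ℝ≥0∞)^k = 1 := by rw [← mul_pow, h22, one_pow]
          calc (2:ℝ≥0∞)^k * 2 * (400 * (2⁻¹:ℝ≥0∞)^k * (2⁻¹:ℝ≥0∞)^k)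
              = (2*400) * ((2:ℝ≥0∞)^k * (2⁻¹:ℝ≥0∞)^k) * (2⁻¹:ℝ≥0∞)^k := by ring
          _ = 800 * (2⁻¹:ℝ≥0∞)^k := by rw [hcancel]; norm_num
      _ ≤ (8*T + 800) * (2⁻¹:ℝ≥0∞)^k := mul_le_mul_left le_add_self _
  calc ∫⁻ y, ENNReal.ofReal ‖x - y‖⁻¹ ∂sigma2
      ≤ ∫⁻ y, (1 + ∑' k : ℕ, (Metric.ball x ((2:ℝ)⁻¹^k)).indicator
          (fun _ => (2:ℝ≥0∞)^(k+1)) y) ∂sigma2 := lintegral_mono hpt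
  _ = sigma2 univ + ∑' k : ℕ, (2:ℝ≥0∞)^(k+1) * sigma2 (Metric.ball x ((2:ℝ)⁻¹^k)) := by
      rw [lintegral_add_left measurable_const, lintegral_const, one_mul,
        lintegral_tsum (fun k => (hmeasb k).aemeasurable)]
      congr 1
      exact tsum_congr fun k => by
        rw [lintegral_indicator (hs := Metric.isOpen_ball.measurableSet), setLIntegral_const]
  _ ≤ T + ∑' k : ℕ, (8*T + 800) * (2⁻¹:ℝ≥0∞)^k := by
      refine add_le_add ?_ (ENNReal.tsum_le_tsum hterm)
      rw [sigma2, Measure.restrict_apply_univ]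
  _ = T + (8*T + 800) * 2 := by
      rw [ENNReal.tsum_mul_left, ENNReal.tsum_geometric]
      congr 1
      have hsub : (1 - 2⁻¹:ℝ≥0∞) = 2⁻¹ :=
        ENNReal.sub_eq_of_eq_add (by norm_num) (by rw [← h22, two_mul])
      rw [hsub, inv_inv]
  _ < ⊤ := by
      refine ENNReal.add_lt_top.2 ⟨hTlt, ENNReal.mul_lt_top ?_ (by norm_num)⟩
      exact ENNReal.add_lt_top.2 ⟨ENNReal.mul_lt_top (by norm_num) hTlt, by norm_num⟩

lemma cross3_measurable (x : E3) :
    Measurable (fun y : E3 => cross3 x y) := by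
  refine (WithLp.measurable_toLp 2 (Fin 3 → ℝ)).comp (f := fun y : E3 => (cross3 x y).ofLp) ?_
  apply measurable_pi_iff.2
  intro i
  have h0 : Measurable fun y : E3 => y 0 := (measurable_pi_apply 0).comp (WithLp.measurable_ofLp 2 _)
  have h1 : Measurable fun y : E3 => y 1 := (measurable_pi_apply 1).comp (WithLp.measurable_ofLp 2 _)
  have h2 : Measurable fun y : E3 => y 2 := (measurable_pi_apply 2).comp (WithLp.measurable_ofLp 2 _)
  fin_cases i
  · show Measurable fun y : E3 => x 1 * y 2 - x 2 * y 1
    exact (measurable_const.mul h2).sub (measurable_const.mul h1)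
  · show Measurable fun y : E3 => x 2 * y 0 - x 0 * y 2
    exact (measurable_const.mul h0).sub (measurable_const.mul h2)
  · show Measurable fun y : E3 => x 0 * y 1 - x 1 * y 0
    exact (measurable_const.mul h1).sub (measurable_const.mul h0)

lemma integrand_measurable {x : E3} {ω : E3 → ℝ} (hmeas : Measurable ω) :
    Measurable (fun y : E3 => (‖x - y‖ ^ 2)⁻¹ • ω y • cross3 x y) := by
  have hsc : Measurable fun y : E3 => (‖x - y‖ ^ 2)⁻¹ * ω y :=
    ((((continuous_const.sub continuous_id).norm.pow 2).measurable).inv).mul hmeas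
  refine (WithLp.measurable_toLp 2 (Fin 3 → ℝ)).comp
    (f := fun y : E3 => ((‖x - y‖ ^ 2)⁻¹ • ω y • cross3 x y).ofLp) ?_
  apply measurable_pi_iff.2
  intro i
  have : (fun y : E3 => ((‖x - y‖ ^ 2)⁻¹ • ω y • cross3 x y) i)
      = fun y : E3 => ((‖x - y‖ ^ 2)⁻¹ * ω y) * cross3 x y i := by
    funext y; simp [smul_smul]
  rw [this]
  exact hsc.mul (((WithLp.measurable_ofLp 2 _).comp (cross3_measurable x)).eval)

lemma integrable_bs {x : E3} (hx0 : 1/2 ≤ x 0) (hxn : ‖x‖ = 1) (ω : E3 → ℝ) {M : ℝ}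
    (hmeas : Measurable ω) (hbdd : ∀ y, |ω y| ≤ M) :
    Integrable (fun y => (‖x - y‖ ^ 2)⁻¹ • ω y • cross3 x y) sigma2 := by
  have hM : 0 ≤ M := le_trans (abs_nonneg _) (hbdd 0)
  constructor
  · exact (integrand_measurable hmeas).aestronglyMeasurable
  · apply HasFiniteIntegral.mono' (g := fun y => (M+1) * ‖x - y‖⁻¹)
    · rw [hasFiniteIntegral_iff_ofReal (ae_of_all _ fun y => by positivity)]
      calc ∫⁻ y, ENNReal.ofReal ((M+1) * ‖x - y‖⁻¹) ∂sigma2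
          = ∫⁻ y, ENNReal.ofReal (M+1) * ENNReal.ofReal (‖x - y‖⁻¹) ∂sigma2 := by
            congr 1; funext y; rw [ENNReal.ofReal_mul (by linarith)]
      _ = ENNReal.ofReal (M+1) * ∫⁻ y, ENNReal.ofReal (‖x - y‖⁻¹) ∂sigma2 :=
          lintegral_const_mul' _ _ ENNReal.ofReal_ne_top
      _ < ⊤ := ENNReal.mul_lt_top ENNReal.ofReal_lt_top (finint hx0)
    · rw [sigma2]
      refine (ae_restrict_iff' S2_measurable).2 (ae_of_all _ fun y hy => ?_)
      have hyn := S2_norm hy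
      have hcr := cross_le x y hxn hyn
      rcases eq_or_lt_of_le (norm_nonneg (x - y)) with h0 | h0
      · have hxy : x = y := by
          have h : x - y = 0 := by rwa [eq_comm, norm_eq_zero] at h0
          exact sub_eq_zero.1 h
        rw [hxy, cross_self]
        simp
      · rw [norm_smul, norm_smul]
        simp only [norm_inv, norm_pow, norm_norm, Real.norm_eq_abs, abs_norm]
        set d := ‖x - y‖ with hd
        have h1 : |ω y| * ‖cross3 x y‖ ≤ M * d := mul_le_mul (hbdd y) hcr (norm_nonneg _) hM
        have h2 : (d^2)⁻¹ * (M * d) = M * d⁻¹ := by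
          field_simp
        calc (d^2)⁻¹ * (|ω y| * ‖cross3 x y‖) ≤ (d^2)⁻¹ * (M * d) := by
              apply mul_le_mul_of_nonneg_left h1 (by positivity)
        _ = M * d⁻¹ := h2
        _ ≤ (M+1) * d⁻¹ := by
            apply mul_le_mul_of_nonneg_right (by linarith) (by positivity)

lemma dot3_smul (a : ℝ) (v w : E3) : dot3 (a • v) w = a * dot3 v w := by
  simp only [dot3, PiLp.smul_apply, smul_eq_mul]; ring

lemma dot3_f (e : E3) (r w : ℝ) (v : E3) : dot3 (r • w • v) e = r * (w * dot3 v e) := by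
  simp only [dot3, PiLp.smul_apply, smul_eq_mul]; ring

lemma dot_cross (c s : ℝ) (hcs : c^2 + s^2 = 1) (y : E3) :
    dot3 (cross3 (vec3 c s 0) y) (vec3 (-s) c 0) = -(y 2) := by
  simp only [cross3, dot3, vec3_0, vec3_1, vec3_2]
  linear_combination (-(y 2)) * hcs

lemma ephi_x (c s : ℝ) : ephi (vec3 c s 0) = vec3 (-s) c 0 := by
  rw [ephi]
  norm_num [Real.sqrt_one]

lemma key (ω : E3 → ℝ) {M : ℝ} (hmeas : Measurable ω) (hbdd : ∀ y, |ω y| ≤ M)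
    (c s : ℝ) (hcs : c^2 + s^2 = 1) (hc : 1/2 ≤ c) :
    dot3 (biotSavart ω (vec3 c (-s) 0)) (ephi (vec3 c (-s) 0)) -
      dot3 (biotSavart ω (vec3 c s 0)) (ephi (vec3 c s 0)) =
    (2 * s / Real.pi) * ∫ y, y 1 * y 2 * ω y /
      (‖vec3 c (-s) 0 - y‖ ^ 2 * ‖vec3 c s 0 - y‖ ^ 2) ∂sigma2 := by
  have hcs' : c^2 + (-s)^2 = 1 := by rw [neg_sq]; exact hcs
  set x₁ := vec3 c (-s) 0 with hx1
  set x₂ := vec3 c s 0 with hx2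
  have hx1n : ‖x₁‖ = 1 := by
    have h : ‖x₁‖^2 = 1 := by
      rw [normsq]; simp only [hx1, vec3_0, vec3_1, vec3_2]; nlinarith
    rw [← Real.sqrt_sq (norm_nonneg x₁), h, Real.sqrt_one]
  have hx2n : ‖x₂‖ = 1 := by
    have h : ‖x₂‖^2 = 1 := by
      rw [normsq]; simp only [hx2, vec3_0, vec3_1, vec3_2]; nlinarith
    rw [← Real.sqrt_sq (norm_nonneg x₂), h, Real.sqrt_one]
  have hf₁ : Integrable (fun y => (‖x₁ - y‖ ^ 2)⁻¹ • ω y • cross3 x₁ y) sigma2 :=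
    integrable_bs (by simp only [hx1, vec3_0]; exact hc) hx1n ω hmeas hbdd
  have hf₂ : Integrable (fun y => (‖x₂ - y‖ ^ 2)⁻¹ • ω y • cross3 x₂ y) sigma2 :=
    integrable_bs (by simp only [hx2, vec3_0]; exact hc) hx2n ω hmeas hbdd
  have he₁ : ephi x₁ = vec3 s c 0 := by rw [hx1, ephi_x, neg_neg]
  have he₂ : ephi x₂ = vec3 (-s) c 0 := by rw [hx2, ephi_x]
  have hd1 : ∀ y : E3, dot3 (cross3 x₁ y) (vec3 s c 0) = -(y 2) := by
    intro y
    have h := dot_cross c (-s) hcs' y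
    rwa [neg_neg] at h
  have hd2 : ∀ y : E3, dot3 (cross3 x₂ y) (vec3 (-s) c 0) = -(y 2) :=
    fun y => dot_cross c s hcs y
  have hdot : ∀ (x e : E3), Integrable (fun y => (‖x - y‖ ^ 2)⁻¹ • ω y • cross3 x y) sigma2 →
      dot3 (biotSavart ω x) e =
        (2*Real.pi)⁻¹ * ∫ y, dot3 ((‖x - y‖ ^ 2)⁻¹ • ω y • cross3 x y) e ∂sigma2 := by
    intro x e hf
    rw [biotSavart, dot3_smul]
    congr 1
    rw [dot3_inner, real_inner_comm, ← integral_inner hf]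
    refine integral_congr_ae (Filter.Eventually.of_forall fun y => ?_)
    show (inner ℝ e ((‖x - y‖ ^ 2)⁻¹ • ω y • cross3 x y) : ℝ)
      = dot3 ((‖x - y‖ ^ 2)⁻¹ • ω y • cross3 x y) e
    rw [dot3_inner, real_inner_comm]
  have hG₁ : Integrable (fun y => (‖x₁ - y‖ ^ 2)⁻¹ * (ω y * -(y 2))) sigma2 := by
    refine (hf₁.inner_const (𝕜 := ℝ) (vec3 s c 0)).congr
      (Filter.Eventually.of_forall fun y => ?_)
    show (inner ℝ ((‖x₁ - y‖ ^ 2)⁻¹ • ω y • cross3 x₁ y) (vec3 s c 0) : ℝ)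
      = (‖x₁ - y‖ ^ 2)⁻¹ * (ω y * -(y 2))
    rw [← dot3_inner, dot3_f, hd1]
  have hG₂ : Integrable (fun y => (‖x₂ - y‖ ^ 2)⁻¹ * (ω y * -(y 2))) sigma2 := by
    refine (hf₂.inner_const (𝕜 := ℝ) (vec3 (-s) c 0)).congr
      (Filter.Eventually.of_forall fun y => ?_)
    show (inner ℝ ((‖x₂ - y‖ ^ 2)⁻¹ • ω y • cross3 x₂ y) (vec3 (-s) c 0) : ℝ)
      = (‖x₂ - y‖ ^ 2)⁻¹ * (ω y * -(y 2))
    rw [← dot3_inner, dot3_f, hd2]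
  have hI₁ : dot3 (biotSavart ω x₁) (ephi x₁) =
      (2*Real.pi)⁻¹ * ∫ y, (‖x₁ - y‖ ^ 2)⁻¹ * (ω y * -(y 2)) ∂sigma2 := by
    rw [he₁, hdot x₁ (vec3 s c 0) hf₁]
    congr 1
    refine integral_congr_ae (Filter.Eventually.of_forall fun y => ?_)
    show dot3 ((‖x₁ - y‖ ^ 2)⁻¹ • ω y • cross3 x₁ y) (vec3 s c 0)
      = (‖x₁ - y‖ ^ 2)⁻¹ * (ω y * -(y 2))
    rw [dot3_f, hd1]
  have hI₂ : dot3 (biotSavart ω x₂) (ephi x₂) =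
      (2*Real.pi)⁻¹ * ∫ y, (‖x₂ - y‖ ^ 2)⁻¹ * (ω y * -(y 2)) ∂sigma2 := by
    rw [he₂, hdot x₂ (vec3 (-s) c 0) hf₂]
    congr 1
    refine integral_congr_ae (Filter.Eventually.of_forall fun y => ?_)
    show dot3 ((‖x₂ - y‖ ^ 2)⁻¹ • ω y • cross3 x₂ y) (vec3 (-s) c 0)
      = (‖x₂ - y‖ ^ 2)⁻¹ * (ω y * -(y 2))
    rw [dot3_f, hd2]
  rw [hI₁, hI₂, ← mul_sub, ← integral_sub hG₁ hG₂]
  have hpt : (∫ y, ((‖x₁ - y‖ ^ 2)⁻¹ * (ω y * -(y 2)) - (‖x₂ - y‖ ^ 2)⁻¹ * (ω y * -(y 2)))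
      ∂sigma2) = ∫ y, 4*s*(y 1 * y 2 * ω y / (‖x₁ - y‖ ^ 2 * ‖x₂ - y‖ ^ 2)) ∂sigma2 := by
    refine integral_congr_ae (Filter.Eventually.of_forall fun y => ?_)
    exact ptwise c s (ω y) y
  rw [hpt, integral_const_mul]
  have hpi := Real.pi_ne_zero
  field_simp
  ring


end ASI

/-- Approach-speed identity (2.11). -/
theorem approach_speed_identity (ω : E3 → ℝ) (M : ℝ) (hmeas : Measurable ω)
    (hbdd : ∀ y, |ω y| ≤ M) :
    ∀ ε ∈ Ioc (0:ℝ) 1,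
      dot3 (biotSavart ω (vec3 (cos ε) (-sin ε) 0)) (ephi (vec3 (cos ε) (-sin ε) 0)) -
        dot3 (biotSavart ω (vec3 (cos ε) (sin ε) 0)) (ephi (vec3 (cos ε) (sin ε) 0)) =
      (2 * sin ε / Real.pi) *
        ∫ y, y 1 * y 2 * ω y /
          (‖vec3 (cos ε) (-sin ε) 0 - y‖ ^ 2 * ‖vec3 (cos ε) (sin ε) 0 - y‖ ^ 2) ∂sigma2 := by
  intro ε hε
  obtain ⟨hε0, hε1⟩ := hε
  have hcs : cos ε ^ 2 + sin ε ^ 2 = 1 := Real.cos_sq_add_sin_sq ε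
  have hc : 1/2 ≤ cos ε := by
    have hpi := Real.pi_gt_three
    have h1 : cos (π/3) ≤ cos ε :=
      Real.cos_le_cos_of_nonneg_of_le_pi hε0.le (by linarith) (by linarith)
    rw [Real.cos_pi_div_three] at h1
    linarith
  exact ASI.key ω hmeas hbdd (cos ε) (sin ε) hcs hc
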